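/- Suppose N consists of coset leaders (each n ∈ N has minimal weight in its coset). If r ∈ F_2^n has coset representative n ∈ N with n ≠ 0, then there exists an index i such that wt(φ(n, e_i)) = wt(n) − 1 and r + e_i lies in the coset of φ(n, e_i); hence the backward step of the (N, φ)-reduction decoding algorithm always makes progress and terminates with a codeword c at distance wt(n) from r. -/

import Mathlib

lemma zmod2_ne_zero_eq_one : ∀ a : ZMod 2, a ≠ 0 → a = 1 := by decide

lemma zmod2_single_filter (k : ℕ) (m : Fin k → ZMod 2) (i : Fin k) (h : m i ≠ 0) :
    hammingNorm (m + Pi.single i 1) = hammingNorm m - 1 := by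
  have hmi : m i = 1 := zmod2_ne_zero_eq_one _ h
  set v : Fin k → ZMod 2 := m + Pi.single i 1 with hv
  unfold hammingNorm
  have : (Finset.univ.filter fun j => v j ≠ 0)
      = (Finset.univ.filter fun j => m j ≠ 0).erase i := by
    ext j
    rcases eq_or_ne j i with rfl | hj
    · simp [hv, hmi]
      decide
    · simp [hv, Finset.mem_erase, hj, Pi.single_eq_of_ne hj]
  rw [this, Finset.card_erase_of_mem (by simp [hmi])]

lemma zmod2_single_le (k : ℕ) (x : Fin k → ZMod 2) (i : Fin k) :
    hammingNorm (x + Pi.single i 1) ≤ hammingNorm x + 1 := by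
  set v : Fin k → ZMod 2 := x + Pi.single i 1 with hv
  unfold hammingNorm
  have hsub : (Finset.univ.filter fun j => v j ≠ 0)
      ⊆ insert i (Finset.univ.filter fun j => x j ≠ 0) := by
    intro j hj
    rcases eq_or_ne j i with rfl | hji
    · simp
    · simp only [Finset.mem_insert]
      right
      simp only [Finset.mem_filter, Finset.mem_univ, true_and] at hj ⊢
      simpa [hv, Pi.single_eq_of_ne hji] using hj
  calc (Finset.univ.filter fun j => v j ≠ 0).card
      ≤ (insert i (Finset.univ.filter fun j => x j ≠ 0)).card := Finset.card_le_card hsub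
    _ ≤ _ := Finset.card_insert_le _ _

/-- The backward step of the `(N, φ)`-reduction decoding algorithm always makes
progress when the representative is nonzero, and the algorithm terminates with a
codeword at distance `wt(n)` from `r`. -/
theorem backward_step_progress (n : ℕ) (C : Submodule (ZMod 2) (Fin n → ZMod 2))
    (N : Set (Fin n → ZMod 2)) (φ : (Fin n → ZMod 2) → Fin n → (Fin n → ZMod 2))
    (h0 : (0 : Fin n → ZMod 2) ∈ N)
    (htrans : ∀ y : Fin n → ZMod 2, ∃! m, m ∈ N ∧ y - m ∈ C)
    (hlead : ∀ m ∈ N, ∀ v : Fin n → ZMod 2, v - m ∈ C → hammingNorm m ≤ hammingNorm v)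
    (hφ : ∀ m ∈ N, ∀ i : Fin n, φ m i ∈ N ∧ (m + Pi.single i 1) - φ m i ∈ C)
    (r m : Fin n → ZMod 2) (hm : m ∈ N) (hrm : r - m ∈ C) (hm0 : m ≠ 0) :
    (∃ i : Fin n, hammingNorm (φ m i) = hammingNorm m - 1 ∧
      (r + Pi.single i 1) - φ m i ∈ C) ∧
    ∃ c ∈ C, hammingDist r c = hammingNorm m := by
  constructor
  · obtain ⟨i, hi⟩ : ∃ i, m i ≠ 0 := by
      by_contra h
      push_neg at h
      exact hm0 (funext fun i => h i)
    obtain ⟨hφN, hφC⟩ := hφ m hm i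
    have hwt : hammingNorm (m + Pi.single i 1) = hammingNorm m - 1 :=
      zmod2_single_filter n m i hi
    have h1 : hammingNorm (φ m i) ≤ hammingNorm m - 1 := by
      rw [← hwt]; exact hlead _ hφN _ hφC
    have h4 : (φ m i + Pi.single i 1) - m ∈ C := by
      have hneg := C.neg_mem hφC
      have heq : (φ m i + Pi.single i 1) - m = -((m + Pi.single i 1) - φ m i) := by
        funext j
        simp only [Pi.sub_apply, Pi.add_apply, Pi.neg_apply]
        exact (by decide : ∀ a b c : ZMod 2, a + b - c = -(c + b - a)) _ _ _
      rw [heq]; exact hneg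
    have h5 : hammingNorm m ≤ hammingNorm (φ m i + Pi.single i 1) :=
      hlead m hm _ h4
    have h6 : hammingNorm (φ m i + Pi.single i 1) ≤ hammingNorm (φ m i) + 1 :=
      zmod2_single_le n (φ m i) i
    have hpos : 1 ≤ hammingNorm m := by
      rcases Nat.eq_zero_or_pos (hammingNorm m) with h | h
      · exact absurd (hammingNorm_eq_zero.mp h) hm0
      · exact h
    refine ⟨i, by omega, ?_⟩
    have hdec : (r + Pi.single i 1) - φ m i = (r - m) + ((m + Pi.single i 1) - φ m i) := by
      funext j; simp only [Pi.sub_apply, Pi.add_apply]; ring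
    rw [hdec]
    exact C.add_mem hrm hφC
  · refine ⟨r - m, hrm, ?_⟩
    rw [hammingDist_eq_hammingNorm]
    congr 1
    funext j
    simp only [Pi.sub_apply, Pi.add_apply, Pi.neg_apply]
    exact (by decide : ∀ a b : ZMod 2, -a + (a - b) = b) _ _
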